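/- Let R be a left Noetherian ring, M an object of the bounded derived category D^b(R) with M ⊥ M and M ⊥ R, and let Q → M → Σ^{n+1} ΩM → ΣQ be the distinguished triangle of Construction 3.1 with Q a perfect complex and ΩM a finitely generated R-module. Then M ⊥ ΩM, i.e., Hom_{D^b(R)}(M, Σ^i ΩM) = 0 for all integers i with |i| sufficiently large. (First step of the proof of Proposition 3.2.) -/

import Mathlib

open CategoryTheory Limits Pretriangulated

universe w v u

section Triangulated

variable {C : Type v} [Category.{w} C] [Preadditive C] [HasZeroObject C] [HasShift C ℤ]
  [∀ n : ℤ, (shiftFunctor C n).Additive] [Pretriangulated C]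

/-- Two objects `M` and `N` of a triangulated category are *eventually orthogonal*,
written `M ⊥ N`, if `Hom(M, Σ^i N) = 0` for all integers `i` with `|i|` sufficiently large. -/
def EvOrth (M N : C) : Prop :=
  ∃ n : ℕ, ∀ i : ℤ, (n : ℤ) ≤ |i| → ∀ f : M ⟶ N⟦i⟧, f = 0

/-- `X` is a direct summand of `Y` (i.e. `X` is a retract of `Y`). -/
def IsDirectSummand (X Y : C) : Prop :=
  ∃ (s : X ⟶ Y) (r : Y ⟶ X), s ≫ r = 𝟙 X

/-- A class of objects of a triangulated category is *thick* if it is closed under all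
shifts `Σ^i` (`i : ℤ`), satisfies the two-out-of-three property for distinguished
triangles, and is closed under direct summands. -/
def IsThickSet (S : Set C) : Prop :=
  (∀ X ∈ S, ∀ i : ℤ, (X⟦i⟧ : C) ∈ S) ∧
  (∀ T : Triangle C, T ∈ (distTriang C) →
    ((T.obj₁ ∈ S → T.obj₂ ∈ S → T.obj₃ ∈ S) ∧
     (T.obj₂ ∈ S → T.obj₃ ∈ S → T.obj₁ ∈ S) ∧
     (T.obj₁ ∈ S → T.obj₃ ∈ S → T.obj₂ ∈ S))) ∧
  (∀ X Y : C, IsDirectSummand X Y → Y ∈ S → X ∈ S)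

/-- The *thick closure* of a class of objects: the intersection of all thick
subcategories containing it. -/
def thickClosure (A : Set C) : Set C :=
  {X | ∀ S : Set C, IsThickSet S → A ⊆ S → X ∈ S}

/-- A *thick subcategory of the full triangulated subcategory* on a class `Amb` of objects:
a subclass of `Amb` closed under shifts, under two-out-of-three for distinguished triangles
with all three vertices in `Amb`, and under direct summands (within `Amb`). -/
def IsThickSetIn (Amb S : Set C) : Prop :=
  S ⊆ Amb ∧
  (∀ X ∈ S, ∀ i : ℤ, (X⟦i⟧ : C) ∈ S) ∧
  (∀ T : Triangle C, T ∈ (distTriang C) → T.obj₁ ∈ Amb → T.obj₂ ∈ Amb → T.obj₃ ∈ Amb →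
    ((T.obj₁ ∈ S → T.obj₂ ∈ S → T.obj₃ ∈ S) ∧
     (T.obj₂ ∈ S → T.obj₃ ∈ S → T.obj₁ ∈ S) ∧
     (T.obj₁ ∈ S → T.obj₃ ∈ S → T.obj₂ ∈ S))) ∧
  (∀ X Y : C, X ∈ Amb → IsDirectSummand X Y → Y ∈ S → X ∈ S)

/-- The thick closure of a class of objects computed inside the full triangulated
subcategory on the class `Amb`. -/
def thickClosureIn (Amb A : Set C) : Set C :=
  {X | ∀ S : Set C, IsThickSetIn Amb S → A ⊆ S → X ∈ S}

end Triangulated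

section Derived

open DerivedCategory

variable (R : Type u) [Ring R] [HasDerivedCategory.{w} (ModuleCat.{u} R)]

/-- The objects of the bounded derived category `D^b(R-mod)` of finitely generated
`R`-modules, realized inside the derived category of `R`-modules as the complexes whose
homology is bounded and degreewise finitely generated. -/
def Db : Set (DerivedCategory (ModuleCat.{u} R)) :=
  {X | (∀ n : ℤ, Module.Finite R ((homologyFunctor (ModuleCat.{u} R) n).obj X)) ∧
    (∃ a b : ℤ, ∀ n : ℤ, (n < a ∨ b < n) →
      IsZero ((homologyFunctor (ModuleCat.{u} R) n).obj X))}

/-- An `R`-module viewed as a stalk complex concentrated in degree `0`. -/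
noncomputable def stalk (M : ModuleCat.{u} R) : DerivedCategory (ModuleCat.{u} R) :=
  (DerivedCategory.singleFunctor (ModuleCat.{u} R) 0).obj M

/-- The ring `R` viewed as a stalk complex in degree `0`. -/
noncomputable def RObj : DerivedCategory (ModuleCat.{u} R) :=
  stalk R (ModuleCat.of R R)

/-- The perfect complexes: the thick closure of the stalk complex `R`
inside `D^b(R-mod)`. -/
noncomputable def ThickR : Set (DerivedCategory (ModuleCat.{u} R)) :=
  thickClosureIn (Db R) {RObj R}

end Derived


section AuxTriangulated

variable {C : Type v} [Category.{w} C] [Preadditive C] [HasZeroObject C] [HasShift C ℤ]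
  [∀ n : ℤ, (shiftFunctor C n).Additive] [Pretriangulated C]

lemma EvOrth.of_iso {M N N' : C} (e : N ≅ N') (h : EvOrth M N) : EvOrth M N' := by
  obtain ⟨m, hm⟩ := h
  refine ⟨m, fun i hi f => ?_⟩
  have h0 : f ≫ (e.inv)⟦i⟧' = 0 := hm i hi _
  calc f = (f ≫ e.inv⟦i⟧') ≫ e.hom⟦i⟧' := by
          rw [Category.assoc, ← Functor.map_comp, e.inv_hom_id,
            CategoryTheory.Functor.map_id, Category.comp_id]
    _ = 0 := by rw [h0, zero_comp]

lemma EvOrth.shift {M N : C} (h : EvOrth M N) (k : ℤ) : EvOrth M (N⟦k⟧) := by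
  obtain ⟨m, hm⟩ := h
  refine ⟨m + k.natAbs, fun i hi f => ?_⟩
  have hik : (m : ℤ) ≤ |k + i| := by
    have h1 : |i| ≤ |k + i| + |k| := by
      have h2 := abs_add_le (k + i) (-k)
      rw [abs_neg] at h2
      have h3 : k + i + -k = i := by ring
      rwa [h3] at h2
    have hk : (k.natAbs : ℤ) = |k| := (Int.abs_eq_natAbs k).symm
    push_cast at hi
    linarith
  have e := (shiftFunctorAdd' C k i (k + i) rfl).app N
  have h0 : f ≫ e.inv = 0 := hm _ hik _
  calc f = (f ≫ e.inv) ≫ e.hom := by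
          rw [Category.assoc, e.inv_hom_id]; exact (Category.comp_id f).symm
    _ = 0 := by rw [h0, zero_comp]

lemma EvOrth.unshift {M N : C} (k : ℤ) (h : EvOrth M (N⟦k⟧)) : EvOrth M N := by
  refine EvOrth.of_iso ?_ (h.shift (-k))
  exact (shiftFunctorCompIsoId C k (-k) (by ring)).app N

lemma EvOrth.two_of_three {M : C} {T : Triangle C} (hT : T ∈ distTriang C)
    (h₁ : EvOrth M T.obj₁) (h₃ : EvOrth M T.obj₃) : EvOrth M T.obj₂ := by
  obtain ⟨m₁, hm₁⟩ := h₁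
  obtain ⟨m₃, hm₃⟩ := h₃
  refine ⟨max m₁ m₃, fun i hi f => ?_⟩
  have hT' := Triangle.shift_distinguished T hT i
  set T' := (CategoryTheory.shiftFunctor (Triangle C) i).obj T with hT'def
  have h2 : (f ≫ T'.mor₂ : M ⟶ T.obj₃⟦i⟧) = 0 := hm₃ i (le_trans (by push_cast; omega) hi) _
  obtain ⟨g, hg⟩ := Triangle.coyoneda_exact₂ T' hT' f h2
  have hg0 : (g : M ⟶ T.obj₁⟦i⟧) = 0 := hm₁ i (le_trans (by push_cast; omega) hi) _
  rw [hg, hg0, zero_comp]; rfl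

lemma EvOrth.two_of_three₃ {M : C} {T : Triangle C} (hT : T ∈ distTriang C)
    (h₁ : EvOrth M T.obj₁) (h₂ : EvOrth M T.obj₂) : EvOrth M T.obj₃ :=
  EvOrth.two_of_three (rot_of_distTriang T hT) h₂ (h₁.shift 1)

lemma EvOrth.two_of_three₁ {M : C} {T : Triangle C} (hT : T ∈ distTriang C)
    (h₂ : EvOrth M T.obj₂) (h₃ : EvOrth M T.obj₃) : EvOrth M T.obj₁ :=
  EvOrth.two_of_three (inv_rot_of_distTriang T hT) (h₃.shift (-1)) h₂

end AuxTriangulated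

section AuxDerived

open DerivedCategory

variable (R : Type u) [Ring R] [HasDerivedCategory.{w} (ModuleCat.{u} R)]

lemma finite_of_isZero (X : ModuleCat.{u} R) (h : IsZero X) : Module.Finite R X := by
  have h0 : (𝟙 X : X ⟶ X) = 0 := h.eq_of_src _ _
  have hs : Subsingleton X := ⟨fun a b => by
    have ha : a = (0 : X ⟶ X) a := congrArg (fun φ : X ⟶ X => φ a) h0
    have hb : b = (0 : X ⟶ X) b := congrArg (fun φ : X ⟶ X => φ b) h0
    rw [ha, hb]
    show (0 : X →ₗ[R] X) a = (0 : X →ₗ[R] X) b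
    simp⟩
  infer_instance

lemma Db_shift {X : DerivedCategory (ModuleCat.{u} R)} (hX : X ∈ Db R) (i : ℤ) :
    (X⟦i⟧ : DerivedCategory (ModuleCat.{u} R)) ∈ Db R := by
  obtain ⟨hfin, a, b, hb⟩ := hX
  constructor
  · intro m
    have e : (homologyFunctor (ModuleCat.{u} R) m).obj (X⟦i⟧) ≅
        (homologyFunctor (ModuleCat.{u} R) (i + m)).obj X :=
      ((homologyFunctor (ModuleCat.{u} R) 0).shiftIso i m (i + m) rfl).app X
    have := hfin (i + m)
    exact Module.Finite.equiv e.symm.toLinearEquiv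
  · refine ⟨a - i, b - i, fun m hm => ?_⟩
    have e : (homologyFunctor (ModuleCat.{u} R) m).obj (X⟦i⟧) ≅
        (homologyFunctor (ModuleCat.{u} R) (i + m)).obj X :=
      ((homologyFunctor (ModuleCat.{u} R) 0).shiftIso i m (i + m) rfl).app X
    exact IsZero.of_iso (hb (i + m) (by omega)) e

lemma stalk_mem_Db (A : ModuleCat.{u} R) (hA : Module.Finite R A) : stalk R A ∈ Db R := by
  have e : ∀ m : ℤ, (homologyFunctor (ModuleCat.{u} R) m).obj (stalk R A) ≅
      ((HomologicalComplex.single (ModuleCat.{u} R) (ComplexShape.up ℤ) 0).obj A).homology m :=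
    fun m =>
      ((homologyFunctor (ModuleCat.{u} R) m).mapIso
        (((SingleFunctors.evaluation _ _ (0 : ℤ)).mapIso
          (singleFunctorsPostcompQIso (ModuleCat.{u} R))).app A)) ≪≫
      (homologyFunctorFactors (ModuleCat.{u} R) m).app _
  constructor
  · intro m
    by_cases hm : m = 0
    · subst hm
      have e' := e 0 ≪≫ HomologicalComplex.singleObjHomologySelfIso _ 0 A
      exact Module.Finite.equiv e'.symm.toLinearEquiv
    · exact finite_of_isZero R _
        (IsZero.of_iso (HomologicalComplex.isZero_single_obj_homology _ 0 A m hm) (e m))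
  · refine ⟨0, 0, fun m hm => ?_⟩
    exact IsZero.of_iso
      (HomologicalComplex.isZero_single_obj_homology _ 0 A m (by omega)) (e m)

end AuxDerived

open DerivedCategory in
/-- **(First step of the proof of Proposition 3.2.)** Let `M` be an object of `D^b(R-mod)`
with `M ⊥ M` and `M ⊥ R`, and let `Q ⟶ M ⟶ Σ^{n+1} ΩM ⟶ ΣQ` be a distinguished triangle
as in Construction 3.1, with `Q` a perfect complex and `ΩM` a finitely generated
`R`-module. Then `M ⊥ ΩM`. -/
theorem evOrth_syzygy (R : Type u) [Ring R] [IsNoetherianRing R]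
    [HasDerivedCategory.{w} (ModuleCat.{u} R)]
    (M : DerivedCategory (ModuleCat.{u} R)) (hM : M ∈ Db R)
    (hMM : EvOrth M M) (hMR : EvOrth M (RObj R))
    (N : ModuleCat.{u} R) (hN : Module.Finite R N) (n : ℤ)
    (Q : DerivedCategory (ModuleCat.{u} R)) (hQ : Q ∈ ThickR R)
    (f : Q ⟶ M) (g : M ⟶ (stalk R N)⟦n + 1⟧) (h : (stalk R N)⟦n + 1⟧ ⟶ Q⟦(1 : ℤ)⟧)
    (hT : Triangle.mk f g h ∈ distTriang (DerivedCategory (ModuleCat.{u} R))) :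
    EvOrth M (stalk R N) := by
  set S : Set (DerivedCategory (ModuleCat.{u} R)) :=
    {X | X ∈ Db R ∧ EvOrth M X} with hSdef
  have hthick : IsThickSetIn (Db R) S := by
    refine ⟨fun X hX => hX.1, fun X hX i => ⟨Db_shift R hX.1 i, hX.2.shift i⟩, ?_, ?_⟩
    · intro T hTd h1 h2 h3
      exact ⟨fun a b => ⟨h3, EvOrth.two_of_three₃ hTd a.2 b.2⟩,
        fun a b => ⟨h1, EvOrth.two_of_three₁ hTd a.2 b.2⟩,
        fun a b => ⟨h2, EvOrth.two_of_three hTd a.2 b.2⟩⟩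
    · rintro X Y hXA ⟨s, r, hsr⟩ hY
      refine ⟨hXA, ?_⟩
      obtain ⟨m, hm⟩ := hY.2
      refine ⟨m, fun i hi f => ?_⟩
      have h0 : f ≫ s⟦i⟧' = 0 := hm i hi _
      calc f = (f ≫ s⟦i⟧') ≫ r⟦i⟧' := by
              rw [Category.assoc, ← Functor.map_comp, hsr,
                CategoryTheory.Functor.map_id, Category.comp_id]
        _ = 0 := by rw [h0, zero_comp]
  have hRS : RObj R ∈ S := ⟨stalk_mem_Db R (ModuleCat.of R R) (Module.Finite.self R), hMR⟩
  have hQS : Q ∈ S := hQ S hthick (by rintro X rfl; exact hRS)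
  have h3 : EvOrth M ((stalk R N)⟦(n + 1 : ℤ)⟧) :=
    EvOrth.two_of_three₃ hT hQS.2 hMM
  exact EvOrth.unshift (n + 1) h3
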